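/- Let β ∈ ℝ and let x : ℝ → ℝ³ be a differentiable solution of the amplitude ODE system x′(t) = F_β(x(t)), where F_β(a,b,c) = (6(1−β²)a − 6√2 β bc − 6(b²+c²)a − 3a³, 6(1−β²)b − 6√2 β ac − 6(a²+c²)b − 3b³, 6(1−β²)c − 6√2 β ab − 6(a²+b²)c − 3c³). Then for all t, d/dt V_β(x(t)) = −‖∇V_β(x(t))‖² ≤ 0; in particular t ↦ V_β(x(t)) is nonincreasing, i.e. V_β is a Lyapunov function for the amplitude system. -/

import Mathlib

/-- The Lyapunov function `V_β` of the amplitude ODE system. -/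
noncomputable def V (β a b c : ℝ) : ℝ :=
  -3 * (1 - β ^ 2) * (a ^ 2 + b ^ 2 + c ^ 2) + 6 * Real.sqrt 2 * β * (a * b * c)
    + 3 * (a ^ 2 * b ^ 2 + b ^ 2 * c ^ 2 + a ^ 2 * c ^ 2)
    + 3 / 4 * (a ^ 4 + b ^ 4 + c ^ 4)

/-- Partial derivative of a function of three real variables in the first variable. -/
noncomputable def pA (f : ℝ → ℝ → ℝ → ℝ) (a b c : ℝ) : ℝ := deriv (fun t => f t b c) a

/-- Partial derivative in the second variable. -/
noncomputable def pB (f : ℝ → ℝ → ℝ → ℝ) (a b c : ℝ) : ℝ := deriv (fun t => f a t c) b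

/-- Partial derivative in the third variable. -/
noncomputable def pC (f : ℝ → ℝ → ℝ → ℝ) (a b c : ℝ) : ℝ := deriv (fun t => f a b t) c

/-- The squared Euclidean norm of the gradient `∇V_β`. -/
noncomputable def gradVNormSq (β a b c : ℝ) : ℝ :=
  (pA (V β) a b c) ^ 2 + (pB (V β) a b c) ^ 2 + (pC (V β) a b c) ^ 2

/-- The right-hand side of the amplitude ODE system. -/
noncomputable def F (β : ℝ) (p : ℝ × ℝ × ℝ) : ℝ × ℝ × ℝ :=
  (6 * (1 - β ^ 2) * p.1 - 6 * Real.sqrt 2 * β * p.2.1 * p.2.2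
      - 6 * (p.2.1 ^ 2 + p.2.2 ^ 2) * p.1 - 3 * p.1 ^ 3,
   6 * (1 - β ^ 2) * p.2.1 - 6 * Real.sqrt 2 * β * p.1 * p.2.2
      - 6 * (p.1 ^ 2 + p.2.2 ^ 2) * p.2.1 - 3 * p.2.1 ^ 3,
   6 * (1 - β ^ 2) * p.2.2 - 6 * Real.sqrt 2 * β * p.1 * p.2.1
      - 6 * (p.1 ^ 2 + p.2.1 ^ 2) * p.2.2 - 3 * p.2.2 ^ 3)

lemma hVa (β a b c : ℝ) : HasDerivAt (fun t => V β t b c)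
    (-6 * (1 - β ^ 2) * a + 6 * Real.sqrt 2 * β * (b * c) + 6 * a * (b ^ 2 + c ^ 2)
      + 3 * a ^ 3) a := by
  unfold V
  have hid : HasDerivAt (fun t : ℝ => t) 1 a := hasDerivAt_id a
  have hp2 := hasDerivAt_pow 2 a
  have hp4 := hasDerivAt_pow 4 a
  have A := ((hp2.add_const (b ^ 2 + c ^ 2)).const_mul (-3 * (1 - β ^ 2)))
  have B := (((hid.mul_const b).mul_const c).const_mul (6 * Real.sqrt 2 * β))
  have C := ((((hp2.mul_const (b ^ 2)).add_const (b ^ 2 * c ^ 2)).add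
      (hp2.mul_const (c ^ 2))).const_mul 3)
  have D := ((hp4.add_const (b ^ 4 + c ^ 4)).const_mul (3 / 4))
  have := ((A.add B).add C).add D
  refine (this.congr_deriv ?_).congr_of_eventuallyEq (Filter.Eventually.of_forall fun t => ?_)
  · push_cast
    ring
  · simp only [Pi.add_apply]
    ring

lemma hVb (β a b c : ℝ) : HasDerivAt (fun t => V β a t c)
    (-6 * (1 - β ^ 2) * b + 6 * Real.sqrt 2 * β * (a * c) + 6 * b * (a ^ 2 + c ^ 2)
      + 3 * b ^ 3) b := by
  unfold V
  have hid : HasDerivAt (fun t : ℝ => t) 1 b := hasDerivAt_id b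
  have hp2 := hasDerivAt_pow 2 b
  have hp4 := hasDerivAt_pow 4 b
  have A := (((hp2.const_add (a ^ 2)).add_const (c ^ 2)).const_mul (-3 * (1 - β ^ 2)))
  have B := (((hid.const_mul a).mul_const c).const_mul (6 * Real.sqrt 2 * β))
  have C := ((((hp2.const_mul (a ^ 2)).add (hp2.mul_const (c ^ 2))).add_const
      (a ^ 2 * c ^ 2)).const_mul 3)
  have D := (((hp4.const_add (a ^ 4)).add_const (c ^ 4)).const_mul (3 / 4))
  have := ((A.add B).add C).add D
  refine this.congr_deriv ?_
  push_cast
  ring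

lemma hVc (β a b c : ℝ) : HasDerivAt (fun t => V β a b t)
    (-6 * (1 - β ^ 2) * c + 6 * Real.sqrt 2 * β * (a * b) + 6 * c * (a ^ 2 + b ^ 2)
      + 3 * c ^ 3) c := by
  unfold V
  have hid : HasDerivAt (fun t : ℝ => t) 1 c := hasDerivAt_id c
  have hp2 := hasDerivAt_pow 2 c
  have hp4 := hasDerivAt_pow 4 c
  have A := ((hp2.const_add (a ^ 2 + b ^ 2)).const_mul (-3 * (1 - β ^ 2)))
  have B := ((hid.const_mul (a * b)).const_mul (6 * Real.sqrt 2 * β))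
  have C := (((hp2.const_mul (b ^ 2)).add (hp2.const_mul (a ^ 2))).const_add
      (a ^ 2 * b ^ 2)).const_mul 3
  have D := ((hp4.const_add (a ^ 4 + b ^ 4)).const_mul (3 / 4))
  have := ((A.add B).add C).add D
  refine (this.congr_deriv ?_).congr_of_eventuallyEq (Filter.Eventually.of_forall fun t => ?_)
  · push_cast
    ring
  · simp only [Pi.add_apply]
    ring

lemma pA_eq (β a b c : ℝ) : pA (V β) a b c =
    -6 * (1 - β ^ 2) * a + 6 * Real.sqrt 2 * β * (b * c) + 6 * a * (b ^ 2 + c ^ 2)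
      + 3 * a ^ 3 := (hVa β a b c).deriv

lemma pB_eq (β a b c : ℝ) : pB (V β) a b c =
    -6 * (1 - β ^ 2) * b + 6 * Real.sqrt 2 * β * (a * c) + 6 * b * (a ^ 2 + c ^ 2)
      + 3 * b ^ 3 := (hVb β a b c).deriv

lemma pC_eq (β a b c : ℝ) : pC (V β) a b c =
    -6 * (1 - β ^ 2) * c + 6 * Real.sqrt 2 * β * (a * b) + 6 * c * (a ^ 2 + b ^ 2)
      + 3 * c ^ 3 := (hVc β a b c).deriv

/-- Along any differentiable solution `x` of the amplitude ODE system
`x' = F_β(x)`, the Lyapunov function `V_β` satisfies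
`d/dt V_β(x(t)) = -‖∇V_β(x(t))‖² ≤ 0`; in particular `t ↦ V_β(x(t))` is
nonincreasing. -/
theorem V_is_Lyapunov (β : ℝ) (x : ℝ → ℝ × ℝ × ℝ)
    (hx : ∀ t : ℝ, HasDerivAt x (F β (x t)) t) :
    (∀ t : ℝ,
      HasDerivAt (fun s => V β (x s).1 (x s).2.1 (x s).2.2)
        (-gradVNormSq β (x t).1 (x t).2.1 (x t).2.2) t ∧
      -gradVNormSq β (x t).1 (x t).2.1 (x t).2.2 ≤ 0) ∧
    Antitone (fun t => V β (x t).1 (x t).2.1 (x t).2.2) := by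
  have key : ∀ t : ℝ,
      HasDerivAt (fun s => V β (x s).1 (x s).2.1 (x s).2.2)
        (-gradVNormSq β (x t).1 (x t).2.1 (x t).2.2) t := by
    intro t
    set a := (x t).1
    set b := (x t).2.1
    set c := (x t).2.2
    have h1 : HasDerivAt (fun s => (x s).1) (F β (x t)).1 t :=
      by simpa using ((hx t).hasFDerivAt.fst).hasDerivAt
    have h2 : HasDerivAt (fun s => (x s).2.1) (F β (x t)).2.1 t :=
      by simpa using (((hx t).hasFDerivAt.snd).fst).hasDerivAt
    have h3 : HasDerivAt (fun s => (x s).2.2) (F β (x t)).2.2 t :=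
      by simpa using (((hx t).hasFDerivAt.snd).snd).hasDerivAt
    set f1 : ℝ := (F β (x t)).1 with hf1
    set f2 : ℝ := (F β (x t)).2.1 with hf2
    set f3 : ℝ := (F β (x t)).2.2 with hf3
    have A := (((h1.pow 2).add (h2.pow 2)).add (h3.pow 2)).const_mul (-3 * (1 - β ^ 2))
    have B := (((h1.mul h2).mul h3).const_mul (6 * Real.sqrt 2 * β))
    have C := ((((h1.pow 2).mul (h2.pow 2)).add ((h2.pow 2).mul (h3.pow 2))).add
        ((h1.pow 2).mul (h3.pow 2))).const_mul 3
    have D := (((h1.pow 4).add (h2.pow 4)).add (h3.pow 4)).const_mul (3 / 4)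
    have H := ((A.add B).add C).add D
    have Heq : HasDerivAt (fun s => V β (x s).1 (x s).2.1 (x s).2.2)
        (-3 * (1 - β ^ 2) * (2 * a ^ 1 * f1 + 2 * b ^ 1 * f2 + 2 * c ^ 1 * f3)
          + 6 * Real.sqrt 2 * β * ((f1 * b + a * f2) * c + a * b * f3)
          + 3 * ((2 * a ^ 1 * f1 * b ^ 2 + a ^ 2 * (2 * b ^ 1 * f2))
            + (2 * b ^ 1 * f2 * c ^ 2 + b ^ 2 * (2 * c ^ 1 * f3))
            + (2 * a ^ 1 * f1 * c ^ 2 + a ^ 2 * (2 * c ^ 1 * f3)))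
          + 3 / 4 * (4 * a ^ 3 * f1 + 4 * b ^ 3 * f2 + 4 * c ^ 3 * f3)) t := by
      unfold V
      exact H
    convert Heq using 1
    have e1 : f1 = 6 * (1 - β ^ 2) * a - 6 * Real.sqrt 2 * β * b * c
        - 6 * (b ^ 2 + c ^ 2) * a - 3 * a ^ 3 := rfl
    have e2 : f2 = 6 * (1 - β ^ 2) * b - 6 * Real.sqrt 2 * β * a * c
        - 6 * (a ^ 2 + c ^ 2) * b - 3 * b ^ 3 := rfl
    have e3 : f3 = 6 * (1 - β ^ 2) * c - 6 * Real.sqrt 2 * β * a * b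
        - 6 * (a ^ 2 + b ^ 2) * c - 3 * c ^ 3 := rfl
    rw [e1, e2, e3]
    unfold gradVNormSq
    rw [pA_eq, pB_eq, pC_eq]
    ring
  refine ⟨fun t => ⟨key t, by
    have : (0:ℝ) ≤ gradVNormSq β (x t).1 (x t).2.1 (x t).2.2 := by
      unfold gradVNormSq; positivity
    linarith⟩, ?_⟩
  apply antitone_of_deriv_nonpos
  · exact fun t => (key t).differentiableAt
  · intro t
    rw [(key t).deriv]
    have : (0:ℝ) ≤ gradVNormSq β (x t).1 (x t).2.1 (x t).2.2 := by
      unfold gradVNormSq; positivity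
    linarith
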